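/- In ℤ⟨X₅⟩ (the free unital associative ring on x₁,...,x₅), let W₁ be the additive subgroup generated by all products x_{i₁}·[x_{i₂},x_{i₃},x_{i₄},x_{i₅}] and W₂ the additive subgroup generated by all [x_{i₁},x_{i₂},x_{i₃},x_{i₄},x_{i₅}] and [x_{i₁},x_{i₂},x_{i₃}]·[x_{i₄},x_{i₅}], where (i₁,...,i₅) ranges over permutations of (1,...,5). Then W₁ ∩ W₂ = 0. -/

import Mathlib

set_option maxRecDepth 100000

noncomputable section

/-- `ℤ⟨X₅⟩`, the free unital associative ring on `{x₁,…,x₅}` (indexed by `Fin 5`). -/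
abbrev R5 : Type := FreeAlgebra ℤ (Fin 5)

/-- The commutator `[a,b] = ab - ba`. -/
def br (a b : R5) : R5 := a * b - b * a

/-- The free generators `x₁,…,x₅` (as `x 0, …, x 4`). -/
def x (i : Fin 5) : R5 := FreeAlgebra.ι ℤ i

/-- `W₁`: the additive subgroup generated by all `x_{i₁}[x_{i₂},x_{i₃},x_{i₄},x_{i₅}]`. -/
def W1 : AddSubgroup R5 := AddSubgroup.closure
  {y | ∃ σ : Equiv.Perm (Fin 5),
      y = x (σ 0) * br (br (br (x (σ 1)) (x (σ 2))) (x (σ 3))) (x (σ 4))}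

/-- `W₂`: the additive subgroup generated by all `[x_{i₁},x_{i₂},x_{i₃},x_{i₄},x_{i₅}]`
and `[x_{i₁},x_{i₂},x_{i₃}][x_{i₄},x_{i₅}]`. -/
def W2 : AddSubgroup R5 := AddSubgroup.closure
  ({y | ∃ σ : Equiv.Perm (Fin 5),
      y = br (br (br (br (x (σ 0)) (x (σ 1))) (x (σ 2))) (x (σ 3))) (x (σ 4))} ∪
   {y | ∃ σ : Equiv.Perm (Fin 5),
      y = br (br (x (σ 0)) (x (σ 1))) (x (σ 2)) * br (x (σ 3)) (x (σ 4))})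

abbrev P5 := Equiv.Perm (Fin 5)

/-- The word of a permutation. -/
def wd (g : P5) : List (Fin 5) := [g 0, g 1, g 2, g 3, g 4]

instance : DecidableEq (FreeMonoid (Fin 5)) := inferInstanceAs (DecidableEq (List (Fin 5)))

def E : R5 ≃ₐ[ℤ] MonoidAlgebra ℤ (FreeMonoid (Fin 5)) := FreeAlgebra.equivMonoidAlgebraFreeMonoid

/-- Coefficient of the word of `τ` in `a`. -/
def coeff (a : R5) (τ : P5) : ℤ := (E a).coeff (FreeMonoid.ofList (wd τ))

def mn (i1 i2 i3 i4 i5 : Fin 5) : R5 := x i1 * x i2 * x i3 * x i4 * x i5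

/-- indicator vector -/
def ind (g τ : P5) : ℤ := if g = τ then 1 else 0

/-- the certificate element of the group ring -/
def m (g : P5) : ℤ :=
  if wd g = [0,1,2,3,4] ∨ wd g = [1,0,2,3,4] ∨ wd g = [2,0,1,3,4] ∨ wd g = [3,0,1,2,4]
    ∨ wd g = [4,0,1,2,3] then 1 else 0

/-- right convolution by `m` -/
def Tm (v : P5 → ℤ) (τ : P5) : ℤ := ∑ ρ : P5, v ρ * m (ρ⁻¹ * τ)

/-- reconstruction map -/
def psi (v : P5 → ℤ) : R5 := ∑ τ : P5, v τ • mn (τ 0) (τ 1) (τ 2) (τ 3) (τ 4)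

theorem Ex (i : Fin 5) : E (x i) = MonoidAlgebra.single (FreeMonoid.of i) 1 := by
  simp [E, x, FreeAlgebra.equivMonoidAlgebraFreeMonoid]

theorem coeff_mn (i1 i2 i3 i4 i5 : Fin 5) (τ : P5) :
    coeff (mn i1 i2 i3 i4 i5) τ = if ([i1,i2,i3,i4,i5] : List (Fin 5)) = wd τ then 1 else 0 := by
  simp only [mn, coeff, map_mul, Ex, MonoidAlgebra.single_mul_single, one_mul, MonoidAlgebra.coeff_single]
  rw [Finsupp.single_apply]
  rfl

theorem coeff_add (a b : R5) (τ : P5) : coeff (a + b) τ = coeff a τ + coeff b τ := by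
  simp only [coeff, map_add]; rfl
theorem coeff_neg (a : R5) (τ : P5) : coeff (-a) τ = - coeff a τ := by
  simp only [coeff, map_neg]; rfl
theorem coeff_sub (a b : R5) (τ : P5) : coeff (a - b) τ = coeff a τ - coeff b τ := by
  simp only [coeff, map_sub]; rfl
theorem coeff_zero (τ : P5) : coeff 0 τ = 0 := by simp [coeff]

theorem wd_inj (g h : P5) (H : wd g = wd h) : g = h := by
  simp only [wd, List.cons.injEq, and_true] at H
  obtain ⟨h0, h1, h2, h3, h4⟩ := H
  apply Equiv.ext; intro i
  fin_cases i <;> assumption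

theorem wd_eq_wd_iff (g h : P5) : wd g = wd h ↔ g = h :=
  ⟨wd_inj g h, fun e => by rw [e]⟩

theorem ind_shift (π σ τ : P5) : ind π (σ⁻¹ * τ) = ind (σ * π) τ := by
  simp [ind, eq_inv_mul_iff_mul_eq]

theorem Tm_addf (v w : P5 → ℤ) (τ : P5) :
    Tm (fun ρ => v ρ + w ρ) τ = Tm v τ + Tm w τ := by
  simp [Tm, add_mul, Finset.sum_add_distrib]
theorem Tm_negf (v : P5 → ℤ) (τ : P5) : Tm (fun ρ => - v ρ) τ = - Tm v τ := by
  simp [Tm, Finset.sum_neg_distrib]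
theorem Tm_zerof (τ : P5) : Tm (fun _ => (0:ℤ)) τ = 0 := by simp [Tm]

theorem psi_addf (v w : P5 → ℤ) : psi (fun ρ => v ρ + w ρ) = psi v + psi w := by
  simp [psi, add_smul, Finset.sum_add_distrib]
theorem psi_negf (v : P5 → ℤ) : psi (fun ρ => - v ρ) = - psi v := by
  simp [psi, neg_smul, Finset.sum_neg_distrib]
theorem psi_zerof : psi (fun _ => (0:ℤ)) = 0 := by simp [psi]

def pm (f g : Fin 5 → Fin 5) (h1 : Function.LeftInverse g f := by decide)
    (h2 : Function.RightInverse g f := by decide) : P5 := ⟨f, g, h1, h2⟩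

def p01234 : P5 := pm ![0,1,2,3,4] ![0,1,2,3,4]
def p02134 : P5 := pm ![0,2,1,3,4] ![0,2,1,3,4]
def p03124 : P5 := pm ![0,3,1,2,4] ![0,2,3,1,4]
def p03214 : P5 := pm ![0,3,2,1,4] ![0,3,2,1,4]
def p04123 : P5 := pm ![0,4,1,2,3] ![0,2,3,4,1]
def p04213 : P5 := pm ![0,4,2,1,3] ![0,3,2,4,1]
def p04312 : P5 := pm ![0,4,3,1,2] ![0,3,4,2,1]
def p04321 : P5 := pm ![0,4,3,2,1] ![0,4,3,2,1]
def p10234 : P5 := pm ![1,0,2,3,4] ![1,0,2,3,4]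
def p20134 : P5 := pm ![2,0,1,3,4] ![1,2,0,3,4]
def p21034 : P5 := pm ![2,1,0,3,4] ![2,1,0,3,4]
def p30124 : P5 := pm ![3,0,1,2,4] ![1,2,3,0,4]
def p31024 : P5 := pm ![3,1,0,2,4] ![2,1,3,0,4]
def p32014 : P5 := pm ![3,2,0,1,4] ![2,3,1,0,4]
def p32104 : P5 := pm ![3,2,1,0,4] ![3,2,1,0,4]
def p40123 : P5 := pm ![4,0,1,2,3] ![1,2,3,4,0]
def p41023 : P5 := pm ![4,1,0,2,3] ![2,1,3,4,0]
def p42013 : P5 := pm ![4,2,0,1,3] ![2,3,1,4,0]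
def p42103 : P5 := pm ![4,2,1,0,3] ![3,2,1,4,0]
def p43012 : P5 := pm ![4,3,0,1,2] ![2,3,4,1,0]
def p43102 : P5 := pm ![4,3,1,0,2] ![3,2,4,1,0]
def p43201 : P5 := pm ![4,3,2,0,1] ![3,4,2,1,0]
def p43210 : P5 := pm ![4,3,2,1,0] ![4,3,2,1,0]
def p01243 : P5 := pm ![0,1,2,4,3] ![0,1,2,4,3]
def p10243 : P5 := pm ![1,0,2,4,3] ![1,0,2,4,3]
def p20143 : P5 := pm ![2,0,1,4,3] ![1,2,0,4,3]
def p21043 : P5 := pm ![2,1,0,4,3] ![2,1,0,4,3]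
theorem p01234_a0 : p01234 (0:Fin 5) = 0 := by decide
theorem p01234_a1 : p01234 (1:Fin 5) = 1 := by decide
theorem p01234_a2 : p01234 (2:Fin 5) = 2 := by decide
theorem p01234_a3 : p01234 (3:Fin 5) = 3 := by decide
theorem p01234_a4 : p01234 (4:Fin 5) = 4 := by decide
theorem p02134_a0 : p02134 (0:Fin 5) = 0 := by decide
theorem p02134_a1 : p02134 (1:Fin 5) = 2 := by decide
theorem p02134_a2 : p02134 (2:Fin 5) = 1 := by decide
theorem p02134_a3 : p02134 (3:Fin 5) = 3 := by decide
theorem p02134_a4 : p02134 (4:Fin 5) = 4 := by decide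
theorem p03124_a0 : p03124 (0:Fin 5) = 0 := by decide
theorem p03124_a1 : p03124 (1:Fin 5) = 3 := by decide
theorem p03124_a2 : p03124 (2:Fin 5) = 1 := by decide
theorem p03124_a3 : p03124 (3:Fin 5) = 2 := by decide
theorem p03124_a4 : p03124 (4:Fin 5) = 4 := by decide
theorem p03214_a0 : p03214 (0:Fin 5) = 0 := by decide
theorem p03214_a1 : p03214 (1:Fin 5) = 3 := by decide
theorem p03214_a2 : p03214 (2:Fin 5) = 2 := by decide
theorem p03214_a3 : p03214 (3:Fin 5) = 1 := by decide
theorem p03214_a4 : p03214 (4:Fin 5) = 4 := by decide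
theorem p04123_a0 : p04123 (0:Fin 5) = 0 := by decide
theorem p04123_a1 : p04123 (1:Fin 5) = 4 := by decide
theorem p04123_a2 : p04123 (2:Fin 5) = 1 := by decide
theorem p04123_a3 : p04123 (3:Fin 5) = 2 := by decide
theorem p04123_a4 : p04123 (4:Fin 5) = 3 := by decide
theorem p04213_a0 : p04213 (0:Fin 5) = 0 := by decide
theorem p04213_a1 : p04213 (1:Fin 5) = 4 := by decide
theorem p04213_a2 : p04213 (2:Fin 5) = 2 := by decide
theorem p04213_a3 : p04213 (3:Fin 5) = 1 := by decide
theorem p04213_a4 : p04213 (4:Fin 5) = 3 := by decide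
theorem p04312_a0 : p04312 (0:Fin 5) = 0 := by decide
theorem p04312_a1 : p04312 (1:Fin 5) = 4 := by decide
theorem p04312_a2 : p04312 (2:Fin 5) = 3 := by decide
theorem p04312_a3 : p04312 (3:Fin 5) = 1 := by decide
theorem p04312_a4 : p04312 (4:Fin 5) = 2 := by decide
theorem p04321_a0 : p04321 (0:Fin 5) = 0 := by decide
theorem p04321_a1 : p04321 (1:Fin 5) = 4 := by decide
theorem p04321_a2 : p04321 (2:Fin 5) = 3 := by decide
theorem p04321_a3 : p04321 (3:Fin 5) = 2 := by decide
theorem p04321_a4 : p04321 (4:Fin 5) = 1 := by decide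
theorem p10234_a0 : p10234 (0:Fin 5) = 1 := by decide
theorem p10234_a1 : p10234 (1:Fin 5) = 0 := by decide
theorem p10234_a2 : p10234 (2:Fin 5) = 2 := by decide
theorem p10234_a3 : p10234 (3:Fin 5) = 3 := by decide
theorem p10234_a4 : p10234 (4:Fin 5) = 4 := by decide
theorem p20134_a0 : p20134 (0:Fin 5) = 2 := by decide
theorem p20134_a1 : p20134 (1:Fin 5) = 0 := by decide
theorem p20134_a2 : p20134 (2:Fin 5) = 1 := by decide
theorem p20134_a3 : p20134 (3:Fin 5) = 3 := by decide
theorem p20134_a4 : p20134 (4:Fin 5) = 4 := by decide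
theorem p21034_a0 : p21034 (0:Fin 5) = 2 := by decide
theorem p21034_a1 : p21034 (1:Fin 5) = 1 := by decide
theorem p21034_a2 : p21034 (2:Fin 5) = 0 := by decide
theorem p21034_a3 : p21034 (3:Fin 5) = 3 := by decide
theorem p21034_a4 : p21034 (4:Fin 5) = 4 := by decide
theorem p30124_a0 : p30124 (0:Fin 5) = 3 := by decide
theorem p30124_a1 : p30124 (1:Fin 5) = 0 := by decide
theorem p30124_a2 : p30124 (2:Fin 5) = 1 := by decide
theorem p30124_a3 : p30124 (3:Fin 5) = 2 := by decide
theorem p30124_a4 : p30124 (4:Fin 5) = 4 := by decide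
theorem p31024_a0 : p31024 (0:Fin 5) = 3 := by decide
theorem p31024_a1 : p31024 (1:Fin 5) = 1 := by decide
theorem p31024_a2 : p31024 (2:Fin 5) = 0 := by decide
theorem p31024_a3 : p31024 (3:Fin 5) = 2 := by decide
theorem p31024_a4 : p31024 (4:Fin 5) = 4 := by decide
theorem p32014_a0 : p32014 (0:Fin 5) = 3 := by decide
theorem p32014_a1 : p32014 (1:Fin 5) = 2 := by decide
theorem p32014_a2 : p32014 (2:Fin 5) = 0 := by decide
theorem p32014_a3 : p32014 (3:Fin 5) = 1 := by decide
theorem p32014_a4 : p32014 (4:Fin 5) = 4 := by decide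
theorem p32104_a0 : p32104 (0:Fin 5) = 3 := by decide
theorem p32104_a1 : p32104 (1:Fin 5) = 2 := by decide
theorem p32104_a2 : p32104 (2:Fin 5) = 1 := by decide
theorem p32104_a3 : p32104 (3:Fin 5) = 0 := by decide
theorem p32104_a4 : p32104 (4:Fin 5) = 4 := by decide
theorem p40123_a0 : p40123 (0:Fin 5) = 4 := by decide
theorem p40123_a1 : p40123 (1:Fin 5) = 0 := by decide
theorem p40123_a2 : p40123 (2:Fin 5) = 1 := by decide
theorem p40123_a3 : p40123 (3:Fin 5) = 2 := by decide
theorem p40123_a4 : p40123 (4:Fin 5) = 3 := by decide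
theorem p41023_a0 : p41023 (0:Fin 5) = 4 := by decide
theorem p41023_a1 : p41023 (1:Fin 5) = 1 := by decide
theorem p41023_a2 : p41023 (2:Fin 5) = 0 := by decide
theorem p41023_a3 : p41023 (3:Fin 5) = 2 := by decide
theorem p41023_a4 : p41023 (4:Fin 5) = 3 := by decide
theorem p42013_a0 : p42013 (0:Fin 5) = 4 := by decide
theorem p42013_a1 : p42013 (1:Fin 5) = 2 := by decide
theorem p42013_a2 : p42013 (2:Fin 5) = 0 := by decide
theorem p42013_a3 : p42013 (3:Fin 5) = 1 := by decide
theorem p42013_a4 : p42013 (4:Fin 5) = 3 := by decide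
theorem p42103_a0 : p42103 (0:Fin 5) = 4 := by decide
theorem p42103_a1 : p42103 (1:Fin 5) = 2 := by decide
theorem p42103_a2 : p42103 (2:Fin 5) = 1 := by decide
theorem p42103_a3 : p42103 (3:Fin 5) = 0 := by decide
theorem p42103_a4 : p42103 (4:Fin 5) = 3 := by decide
theorem p43012_a0 : p43012 (0:Fin 5) = 4 := by decide
theorem p43012_a1 : p43012 (1:Fin 5) = 3 := by decide
theorem p43012_a2 : p43012 (2:Fin 5) = 0 := by decide
theorem p43012_a3 : p43012 (3:Fin 5) = 1 := by decide
theorem p43012_a4 : p43012 (4:Fin 5) = 2 := by decide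
theorem p43102_a0 : p43102 (0:Fin 5) = 4 := by decide
theorem p43102_a1 : p43102 (1:Fin 5) = 3 := by decide
theorem p43102_a2 : p43102 (2:Fin 5) = 1 := by decide
theorem p43102_a3 : p43102 (3:Fin 5) = 0 := by decide
theorem p43102_a4 : p43102 (4:Fin 5) = 2 := by decide
theorem p43201_a0 : p43201 (0:Fin 5) = 4 := by decide
theorem p43201_a1 : p43201 (1:Fin 5) = 3 := by decide
theorem p43201_a2 : p43201 (2:Fin 5) = 2 := by decide
theorem p43201_a3 : p43201 (3:Fin 5) = 0 := by decide
theorem p43201_a4 : p43201 (4:Fin 5) = 1 := by decide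
theorem p43210_a0 : p43210 (0:Fin 5) = 4 := by decide
theorem p43210_a1 : p43210 (1:Fin 5) = 3 := by decide
theorem p43210_a2 : p43210 (2:Fin 5) = 2 := by decide
theorem p43210_a3 : p43210 (3:Fin 5) = 1 := by decide
theorem p43210_a4 : p43210 (4:Fin 5) = 0 := by decide
theorem p01243_a0 : p01243 (0:Fin 5) = 0 := by decide
theorem p01243_a1 : p01243 (1:Fin 5) = 1 := by decide
theorem p01243_a2 : p01243 (2:Fin 5) = 2 := by decide
theorem p01243_a3 : p01243 (3:Fin 5) = 4 := by decide
theorem p01243_a4 : p01243 (4:Fin 5) = 3 := by decide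
theorem p10243_a0 : p10243 (0:Fin 5) = 1 := by decide
theorem p10243_a1 : p10243 (1:Fin 5) = 0 := by decide
theorem p10243_a2 : p10243 (2:Fin 5) = 2 := by decide
theorem p10243_a3 : p10243 (3:Fin 5) = 4 := by decide
theorem p10243_a4 : p10243 (4:Fin 5) = 3 := by decide
theorem p20143_a0 : p20143 (0:Fin 5) = 2 := by decide
theorem p20143_a1 : p20143 (1:Fin 5) = 0 := by decide
theorem p20143_a2 : p20143 (2:Fin 5) = 1 := by decide
theorem p20143_a3 : p20143 (3:Fin 5) = 4 := by decide
theorem p20143_a4 : p20143 (4:Fin 5) = 3 := by decide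
theorem p21043_a0 : p21043 (0:Fin 5) = 2 := by decide
theorem p21043_a1 : p21043 (1:Fin 5) = 1 := by decide
theorem p21043_a2 : p21043 (2:Fin 5) = 0 := by decide
theorem p21043_a3 : p21043 (3:Fin 5) = 4 := by decide
theorem p21043_a4 : p21043 (4:Fin 5) = 3 := by decide
theorem wd_p01234 (σ : P5) : ([σ 0, σ 1, σ 2, σ 3, σ 4] : List (Fin 5)) = wd (σ * p01234) := by
  simp [wd, Equiv.Perm.mul_apply, p01234_a0, p01234_a1, p01234_a2, p01234_a3, p01234_a4]
theorem wd_p02134 (σ : P5) : ([σ 0, σ 2, σ 1, σ 3, σ 4] : List (Fin 5)) = wd (σ * p02134) := by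
  simp [wd, Equiv.Perm.mul_apply, p02134_a0, p02134_a1, p02134_a2, p02134_a3, p02134_a4]
theorem wd_p03124 (σ : P5) : ([σ 0, σ 3, σ 1, σ 2, σ 4] : List (Fin 5)) = wd (σ * p03124) := by
  simp [wd, Equiv.Perm.mul_apply, p03124_a0, p03124_a1, p03124_a2, p03124_a3, p03124_a4]
theorem wd_p03214 (σ : P5) : ([σ 0, σ 3, σ 2, σ 1, σ 4] : List (Fin 5)) = wd (σ * p03214) := by
  simp [wd, Equiv.Perm.mul_apply, p03214_a0, p03214_a1, p03214_a2, p03214_a3, p03214_a4]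
theorem wd_p04123 (σ : P5) : ([σ 0, σ 4, σ 1, σ 2, σ 3] : List (Fin 5)) = wd (σ * p04123) := by
  simp [wd, Equiv.Perm.mul_apply, p04123_a0, p04123_a1, p04123_a2, p04123_a3, p04123_a4]
theorem wd_p04213 (σ : P5) : ([σ 0, σ 4, σ 2, σ 1, σ 3] : List (Fin 5)) = wd (σ * p04213) := by
  simp [wd, Equiv.Perm.mul_apply, p04213_a0, p04213_a1, p04213_a2, p04213_a3, p04213_a4]
theorem wd_p04312 (σ : P5) : ([σ 0, σ 4, σ 3, σ 1, σ 2] : List (Fin 5)) = wd (σ * p04312) := by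
  simp [wd, Equiv.Perm.mul_apply, p04312_a0, p04312_a1, p04312_a2, p04312_a3, p04312_a4]
theorem wd_p04321 (σ : P5) : ([σ 0, σ 4, σ 3, σ 2, σ 1] : List (Fin 5)) = wd (σ * p04321) := by
  simp [wd, Equiv.Perm.mul_apply, p04321_a0, p04321_a1, p04321_a2, p04321_a3, p04321_a4]
theorem wd_p10234 (σ : P5) : ([σ 1, σ 0, σ 2, σ 3, σ 4] : List (Fin 5)) = wd (σ * p10234) := by
  simp [wd, Equiv.Perm.mul_apply, p10234_a0, p10234_a1, p10234_a2, p10234_a3, p10234_a4]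
theorem wd_p20134 (σ : P5) : ([σ 2, σ 0, σ 1, σ 3, σ 4] : List (Fin 5)) = wd (σ * p20134) := by
  simp [wd, Equiv.Perm.mul_apply, p20134_a0, p20134_a1, p20134_a2, p20134_a3, p20134_a4]
theorem wd_p21034 (σ : P5) : ([σ 2, σ 1, σ 0, σ 3, σ 4] : List (Fin 5)) = wd (σ * p21034) := by
  simp [wd, Equiv.Perm.mul_apply, p21034_a0, p21034_a1, p21034_a2, p21034_a3, p21034_a4]
theorem wd_p30124 (σ : P5) : ([σ 3, σ 0, σ 1, σ 2, σ 4] : List (Fin 5)) = wd (σ * p30124) := by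
  simp [wd, Equiv.Perm.mul_apply, p30124_a0, p30124_a1, p30124_a2, p30124_a3, p30124_a4]
theorem wd_p31024 (σ : P5) : ([σ 3, σ 1, σ 0, σ 2, σ 4] : List (Fin 5)) = wd (σ * p31024) := by
  simp [wd, Equiv.Perm.mul_apply, p31024_a0, p31024_a1, p31024_a2, p31024_a3, p31024_a4]
theorem wd_p32014 (σ : P5) : ([σ 3, σ 2, σ 0, σ 1, σ 4] : List (Fin 5)) = wd (σ * p32014) := by
  simp [wd, Equiv.Perm.mul_apply, p32014_a0, p32014_a1, p32014_a2, p32014_a3, p32014_a4]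
theorem wd_p32104 (σ : P5) : ([σ 3, σ 2, σ 1, σ 0, σ 4] : List (Fin 5)) = wd (σ * p32104) := by
  simp [wd, Equiv.Perm.mul_apply, p32104_a0, p32104_a1, p32104_a2, p32104_a3, p32104_a4]
theorem wd_p40123 (σ : P5) : ([σ 4, σ 0, σ 1, σ 2, σ 3] : List (Fin 5)) = wd (σ * p40123) := by
  simp [wd, Equiv.Perm.mul_apply, p40123_a0, p40123_a1, p40123_a2, p40123_a3, p40123_a4]
theorem wd_p41023 (σ : P5) : ([σ 4, σ 1, σ 0, σ 2, σ 3] : List (Fin 5)) = wd (σ * p41023) := by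
  simp [wd, Equiv.Perm.mul_apply, p41023_a0, p41023_a1, p41023_a2, p41023_a3, p41023_a4]
theorem wd_p42013 (σ : P5) : ([σ 4, σ 2, σ 0, σ 1, σ 3] : List (Fin 5)) = wd (σ * p42013) := by
  simp [wd, Equiv.Perm.mul_apply, p42013_a0, p42013_a1, p42013_a2, p42013_a3, p42013_a4]
theorem wd_p42103 (σ : P5) : ([σ 4, σ 2, σ 1, σ 0, σ 3] : List (Fin 5)) = wd (σ * p42103) := by
  simp [wd, Equiv.Perm.mul_apply, p42103_a0, p42103_a1, p42103_a2, p42103_a3, p42103_a4]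
theorem wd_p43012 (σ : P5) : ([σ 4, σ 3, σ 0, σ 1, σ 2] : List (Fin 5)) = wd (σ * p43012) := by
  simp [wd, Equiv.Perm.mul_apply, p43012_a0, p43012_a1, p43012_a2, p43012_a3, p43012_a4]
theorem wd_p43102 (σ : P5) : ([σ 4, σ 3, σ 1, σ 0, σ 2] : List (Fin 5)) = wd (σ * p43102) := by
  simp [wd, Equiv.Perm.mul_apply, p43102_a0, p43102_a1, p43102_a2, p43102_a3, p43102_a4]
theorem wd_p43201 (σ : P5) : ([σ 4, σ 3, σ 2, σ 0, σ 1] : List (Fin 5)) = wd (σ * p43201) := by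
  simp [wd, Equiv.Perm.mul_apply, p43201_a0, p43201_a1, p43201_a2, p43201_a3, p43201_a4]
theorem wd_p43210 (σ : P5) : ([σ 4, σ 3, σ 2, σ 1, σ 0] : List (Fin 5)) = wd (σ * p43210) := by
  simp [wd, Equiv.Perm.mul_apply, p43210_a0, p43210_a1, p43210_a2, p43210_a3, p43210_a4]
theorem wd_p01243 (σ : P5) : ([σ 0, σ 1, σ 2, σ 4, σ 3] : List (Fin 5)) = wd (σ * p01243) := by
  simp [wd, Equiv.Perm.mul_apply, p01243_a0, p01243_a1, p01243_a2, p01243_a3, p01243_a4]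
theorem wd_p10243 (σ : P5) : ([σ 1, σ 0, σ 2, σ 4, σ 3] : List (Fin 5)) = wd (σ * p10243) := by
  simp [wd, Equiv.Perm.mul_apply, p10243_a0, p10243_a1, p10243_a2, p10243_a3, p10243_a4]
theorem wd_p20143 (σ : P5) : ([σ 2, σ 0, σ 1, σ 4, σ 3] : List (Fin 5)) = wd (σ * p20143) := by
  simp [wd, Equiv.Perm.mul_apply, p20143_a0, p20143_a1, p20143_a2, p20143_a3, p20143_a4]
theorem wd_p21043 (σ : P5) : ([σ 2, σ 1, σ 0, σ 4, σ 3] : List (Fin 5)) = wd (σ * p21043) := by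
  simp [wd, Equiv.Perm.mul_apply, p21043_a0, p21043_a1, p21043_a2, p21043_a3, p21043_a4]

theorem g1_expand (σ : P5) : x (σ 0) * br (br (br (x (σ 1)) (x (σ 2))) (x (σ 3))) (x (σ 4)) =
    mn (σ 0) (σ 1) (σ 2) (σ 3) (σ 4) - mn (σ 0) (σ 2) (σ 1) (σ 3) (σ 4) - mn (σ 0) (σ 3) (σ 1) (σ 2) (σ 4) + mn (σ 0) (σ 3) (σ 2) (σ 1) (σ 4) - mn (σ 0) (σ 4) (σ 1) (σ 2) (σ 3) + mn (σ 0) (σ 4) (σ 2) (σ 1) (σ 3) + mn (σ 0) (σ 4) (σ 3) (σ 1) (σ 2) - mn (σ 0) (σ 4) (σ 3) (σ 2) (σ 1) := by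
  simp only [br, mn]; noncomm_ring
theorem coeff_g1 (σ τ : P5) : coeff (x (σ 0) * br (br (br (x (σ 1)) (x (σ 2))) (x (σ 3))) (x (σ 4))) τ = ind (σ * p01234) τ - ind (σ * p02134) τ - ind (σ * p03124) τ + ind (σ * p03214) τ - ind (σ * p04123) τ + ind (σ * p04213) τ + ind (σ * p04312) τ - ind (σ * p04321) τ := by
  rw [g1_expand]
  simp only [coeff_sub, coeff_add, coeff_mn]
  rw [wd_p01234 σ, wd_p02134 σ, wd_p03124 σ, wd_p03214 σ, wd_p04123 σ, wd_p04213 σ, wd_p04312 σ, wd_p04321 σ]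
  simp only [wd_eq_wd_iff, ind]
theorem K_g1 : ∀ γ : P5, m (p01234⁻¹ * γ) - m (p02134⁻¹ * γ) - m (p03124⁻¹ * γ) + m (p03214⁻¹ * γ) - m (p04123⁻¹ * γ) + m (p04213⁻¹ * γ) + m (p04312⁻¹ * γ) - m (p04321⁻¹ * γ) = ind p01234 γ - ind p02134 γ - ind p03124 γ + ind p03214 γ - ind p04123 γ + ind p04213 γ + ind p04312 γ - ind p04321 γ := by decide
theorem TmV_g1 (σ τ : P5) : Tm (fun ρ => ind (σ * p01234) ρ - ind (σ * p02134) ρ - ind (σ * p03124) ρ + ind (σ * p03214) ρ - ind (σ * p04123) ρ + ind (σ * p04213) ρ + ind (σ * p04312) ρ - ind (σ * p04321) ρ) τ = m ((σ * p01234)⁻¹ * τ) - m ((σ * p02134)⁻¹ * τ) - m ((σ * p03124)⁻¹ * τ) + m ((σ * p03214)⁻¹ * τ) - m ((σ * p04123)⁻¹ * τ) + m ((σ * p04213)⁻¹ * τ) + m ((σ * p04312)⁻¹ * τ) - m ((σ * p04321)⁻¹ * τ) := by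
  simp [Tm, sub_mul, add_mul, ind, ite_mul, one_mul, zero_mul,
    Finset.sum_sub_distrib, Finset.sum_add_distrib, Finset.sum_ite_eq]
theorem main_g1 (σ τ : P5) : Tm (coeff (x (σ 0) * br (br (br (x (σ 1)) (x (σ 2))) (x (σ 3))) (x (σ 4)))) τ = coeff (x (σ 0) * br (br (br (x (σ 1)) (x (σ 2))) (x (σ 3))) (x (σ 4))) τ := by
  have hc : coeff (x (σ 0) * br (br (br (x (σ 1)) (x (σ 2))) (x (σ 3))) (x (σ 4))) = fun ρ => ind (σ * p01234) ρ - ind (σ * p02134) ρ - ind (σ * p03124) ρ + ind (σ * p03214) ρ - ind (σ * p04123) ρ + ind (σ * p04213) ρ + ind (σ * p04312) ρ - ind (σ * p04321) ρ := funext (coeff_g1 σ)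
  rw [hc]
  show Tm (fun ρ => ind (σ * p01234) ρ - ind (σ * p02134) ρ - ind (σ * p03124) ρ + ind (σ * p03214) ρ - ind (σ * p04123) ρ + ind (σ * p04213) ρ + ind (σ * p04312) ρ - ind (σ * p04321) ρ) τ = ind (σ * p01234) τ - ind (σ * p02134) τ - ind (σ * p03124) τ + ind (σ * p03214) τ - ind (σ * p04123) τ + ind (σ * p04213) τ + ind (σ * p04312) τ - ind (σ * p04321) τ
  rw [TmV_g1]
  have hK := K_g1 (σ⁻¹ * τ)
  simp only [ind_shift] at hK
  rw [← hK]
  simp [mul_inv_rev, mul_assoc]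
theorem g2a_expand (σ : P5) : br (br (br (br (x (σ 0)) (x (σ 1))) (x (σ 2))) (x (σ 3))) (x (σ 4)) =
    mn (σ 0) (σ 1) (σ 2) (σ 3) (σ 4) - mn (σ 1) (σ 0) (σ 2) (σ 3) (σ 4) - mn (σ 2) (σ 0) (σ 1) (σ 3) (σ 4) + mn (σ 2) (σ 1) (σ 0) (σ 3) (σ 4) - mn (σ 3) (σ 0) (σ 1) (σ 2) (σ 4) + mn (σ 3) (σ 1) (σ 0) (σ 2) (σ 4) + mn (σ 3) (σ 2) (σ 0) (σ 1) (σ 4) - mn (σ 3) (σ 2) (σ 1) (σ 0) (σ 4) - mn (σ 4) (σ 0) (σ 1) (σ 2) (σ 3) + mn (σ 4) (σ 1) (σ 0) (σ 2) (σ 3) + mn (σ 4) (σ 2) (σ 0) (σ 1) (σ 3) - mn (σ 4) (σ 2) (σ 1) (σ 0) (σ 3) + mn (σ 4) (σ 3) (σ 0) (σ 1) (σ 2) - mn (σ 4) (σ 3) (σ 1) (σ 0) (σ 2) - mn (σ 4) (σ 3) (σ 2) (σ 0) (σ 1) + mn (σ 4) (σ 3) (σ 2) (σ 1) (σ 0)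 := by
  simp only [br, mn]; noncomm_ring
theorem coeff_g2a (σ τ : P5) : coeff (br (br (br (br (x (σ 0)) (x (σ 1))) (x (σ 2))) (x (σ 3))) (x (σ 4))) τ = ind (σ * p01234) τ - ind (σ * p10234) τ - ind (σ * p20134) τ + ind (σ * p21034) τ - ind (σ * p30124) τ + ind (σ * p31024) τ + ind (σ * p32014) τ - ind (σ * p32104) τ - ind (σ * p40123) τ + ind (σ * p41023) τ + ind (σ * p42013) τ - ind (σ * p42103) τ + ind (σ * p43012) τ - ind (σ * p43102) τ - ind (σ * p43201) τ + ind (σ * p43210) τ := by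
  rw [g2a_expand]
  simp only [coeff_sub, coeff_add, coeff_mn]
  rw [wd_p01234 σ, wd_p10234 σ, wd_p20134 σ, wd_p21034 σ, wd_p30124 σ, wd_p31024 σ, wd_p32014 σ, wd_p32104 σ, wd_p40123 σ, wd_p41023 σ, wd_p42013 σ, wd_p42103 σ, wd_p43012 σ, wd_p43102 σ, wd_p43201 σ, wd_p43210 σ]
  simp only [wd_eq_wd_iff, ind]
theorem K_g2a : ∀ γ : P5, m (p01234⁻¹ * γ) - m (p10234⁻¹ * γ) - m (p20134⁻¹ * γ) + m (p21034⁻¹ * γ) - m (p30124⁻¹ * γ) + m (p31024⁻¹ * γ) + m (p32014⁻¹ * γ) - m (p32104⁻¹ * γ) - m (p40123⁻¹ * γ) + m (p41023⁻¹ * γ) + m (p42013⁻¹ * γ) - m (p42103⁻¹ * γ) + m (p43012⁻¹ * γ) - m (p43102⁻¹ * γ) - m (p43201⁻¹ * γ) + m (p43210⁻¹ * γ) = 0 := by decide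
theorem TmV_g2a (σ τ : P5) : Tm (fun ρ => ind (σ * p01234) ρ - ind (σ * p10234) ρ - ind (σ * p20134) ρ + ind (σ * p21034) ρ - ind (σ * p30124) ρ + ind (σ * p31024) ρ + ind (σ * p32014) ρ - ind (σ * p32104) ρ - ind (σ * p40123) ρ + ind (σ * p41023) ρ + ind (σ * p42013) ρ - ind (σ * p42103) ρ + ind (σ * p43012) ρ - ind (σ * p43102) ρ - ind (σ * p43201) ρ + ind (σ * p43210) ρ) τ = m ((σ * p01234)⁻¹ * τ) - m ((σ * p10234)⁻¹ * τ) - m ((σ * p20134)⁻¹ * τ) + m ((σ * p21034)⁻¹ * τ) - m ((σ * p30124)⁻¹ * τ) + m ((σ * p31024)⁻¹ * τ) + m ((σ * p32014)⁻¹ * τ) - m ((σ * p32104)⁻¹ * τ) - m ((σ * p40123)⁻¹ * τ) + m ((σ * p41023)⁻¹ * τ) + m ((σ * p42013)⁻¹ * τ) - m ((σ * p42103)⁻¹ * τ) + m ((σ * p43012)⁻¹ * τ) - m ((σ * p43102)⁻¹ * τ) - m ((σ * p43201)⁻¹ * τ) + m ((σ * p43210)⁻¹ * τ) := by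
  have hs : ∀ g : P5, ∑ ρ : P5, ind g ρ * m (ρ⁻¹ * τ) = m (g⁻¹ * τ) := by
    intro g; simp [ind]
  simp only [Tm]
  simp only [sub_mul, add_mul]
  simp only [Finset.sum_sub_distrib, Finset.sum_add_distrib]
  simp only [hs]
theorem main_g2a (σ τ : P5) : Tm (coeff (br (br (br (br (x (σ 0)) (x (σ 1))) (x (σ 2))) (x (σ 3))) (x (σ 4)))) τ = 0 := by
  have hc : coeff (br (br (br (br (x (σ 0)) (x (σ 1))) (x (σ 2))) (x (σ 3))) (x (σ 4))) = fun ρ => ind (σ * p01234) ρ - ind (σ * p10234) ρ - ind (σ * p20134) ρ + ind (σ * p21034) ρ - ind (σ * p30124) ρ + ind (σ * p31024) ρ + ind (σ * p32014) ρ - ind (σ * p32104) ρ - ind (σ * p40123) ρ + ind (σ * p41023) ρ + ind (σ * p42013) ρ - ind (σ * p42103) ρ + ind (σ * p43012) ρ - ind (σ * p43102) ρ - ind (σ * p43201) ρ + ind (σ * p43210) ρ := funext (coeff_g2a σ)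
  rw [hc]
  rw [TmV_g2a]
  have hK := K_g2a (σ⁻¹ * τ)
  rw [← hK]
  simp [mul_inv_rev, mul_assoc]
theorem g2b_expand (σ : P5) : br (br (x (σ 0)) (x (σ 1))) (x (σ 2)) * br (x (σ 3)) (x (σ 4)) =
    mn (σ 0) (σ 1) (σ 2) (σ 3) (σ 4) - mn (σ 1) (σ 0) (σ 2) (σ 3) (σ 4) - mn (σ 2) (σ 0) (σ 1) (σ 3) (σ 4) + mn (σ 2) (σ 1) (σ 0) (σ 3) (σ 4) - mn (σ 0) (σ 1) (σ 2) (σ 4) (σ 3) + mn (σ 1) (σ 0) (σ 2) (σ 4) (σ 3) + mn (σ 2) (σ 0) (σ 1) (σ 4) (σ 3) - mn (σ 2) (σ 1) (σ 0) (σ 4) (σ 3) := by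
  simp only [br, mn]; noncomm_ring
theorem coeff_g2b (σ τ : P5) : coeff (br (br (x (σ 0)) (x (σ 1))) (x (σ 2)) * br (x (σ 3)) (x (σ 4))) τ = ind (σ * p01234) τ - ind (σ * p10234) τ - ind (σ * p20134) τ + ind (σ * p21034) τ - ind (σ * p01243) τ + ind (σ * p10243) τ + ind (σ * p20143) τ - ind (σ * p21043) τ := by
  rw [g2b_expand]
  simp only [coeff_sub, coeff_add, coeff_mn]
  rw [wd_p01234 σ, wd_p10234 σ, wd_p20134 σ, wd_p21034 σ, wd_p01243 σ, wd_p10243 σ, wd_p20143 σ, wd_p21043 σ]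
  simp only [wd_eq_wd_iff, ind]
theorem K_g2b : ∀ γ : P5, m (p01234⁻¹ * γ) - m (p10234⁻¹ * γ) - m (p20134⁻¹ * γ) + m (p21034⁻¹ * γ) - m (p01243⁻¹ * γ) + m (p10243⁻¹ * γ) + m (p20143⁻¹ * γ) - m (p21043⁻¹ * γ) = 0 := by decide
theorem TmV_g2b (σ τ : P5) : Tm (fun ρ => ind (σ * p01234) ρ - ind (σ * p10234) ρ - ind (σ * p20134) ρ + ind (σ * p21034) ρ - ind (σ * p01243) ρ + ind (σ * p10243) ρ + ind (σ * p20143) ρ - ind (σ * p21043) ρ) τ = m ((σ * p01234)⁻¹ * τ) - m ((σ * p10234)⁻¹ * τ) - m ((σ * p20134)⁻¹ * τ) + m ((σ * p21034)⁻¹ * τ) - m ((σ * p01243)⁻¹ * τ) + m ((σ * p10243)⁻¹ * τ) + m ((σ * p20143)⁻¹ * τ) - m ((σ * p21043)⁻¹ * τ) := by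
  simp [Tm, sub_mul, add_mul, ind, ite_mul, one_mul, zero_mul,
    Finset.sum_sub_distrib, Finset.sum_add_distrib, Finset.sum_ite_eq]
theorem main_g2b (σ τ : P5) : Tm (coeff (br (br (x (σ 0)) (x (σ 1))) (x (σ 2)) * br (x (σ 3)) (x (σ 4)))) τ = 0 := by
  have hc : coeff (br (br (x (σ 0)) (x (σ 1))) (x (σ 2)) * br (x (σ 3)) (x (σ 4))) = fun ρ => ind (σ * p01234) ρ - ind (σ * p10234) ρ - ind (σ * p20134) ρ + ind (σ * p21034) ρ - ind (σ * p01243) ρ + ind (σ * p10243) ρ + ind (σ * p20143) ρ - ind (σ * p21043) ρ := funext (coeff_g2b σ)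
  rw [hc]
  rw [TmV_g2b]
  have hK := K_g2b (σ⁻¹ * τ)
  rw [← hK]
  simp [mul_inv_rev, mul_assoc]
theorem psiV_g1 (σ : P5) : psi (fun ρ => ind (σ * p01234) ρ - ind (σ * p02134) ρ - ind (σ * p03124) ρ + ind (σ * p03214) ρ - ind (σ * p04123) ρ + ind (σ * p04213) ρ + ind (σ * p04312) ρ - ind (σ * p04321) ρ) = x (σ 0) * br (br (br (x (σ 1)) (x (σ 2))) (x (σ 3))) (x (σ 4)) := by
  rw [g1_expand σ]
  simp only [psi, sub_smul, add_smul, ind, ite_smul, one_smul, zero_smul,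
    Finset.sum_sub_distrib, Finset.sum_add_distrib, Finset.sum_ite_eq,
    Finset.mem_univ, if_true]
  simp only [mn, Equiv.Perm.mul_apply, p01234_a0, p01234_a1, p01234_a2, p01234_a3, p01234_a4, p02134_a0, p02134_a1, p02134_a2, p02134_a3, p02134_a4, p03124_a0, p03124_a1, p03124_a2, p03124_a3, p03124_a4, p03214_a0, p03214_a1, p03214_a2, p03214_a3, p03214_a4, p04123_a0, p04123_a1, p04123_a2, p04123_a3, p04123_a4, p04213_a0, p04213_a1, p04213_a2, p04213_a3, p04213_a4, p04312_a0, p04312_a1, p04312_a2, p04312_a3, p04312_a4, p04321_a0, p04321_a1, p04321_a2, p04321_a3, p04321_a4]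

theorem psi_g1 (σ : P5) :
    psi (coeff (x (σ 0) * br (br (br (x (σ 1)) (x (σ 2))) (x (σ 3))) (x (σ 4)))) =
    x (σ 0) * br (br (br (x (σ 1)) (x (σ 2))) (x (σ 3))) (x (σ 4)) := by
  rw [funext (coeff_g1 σ)]
  exact psiV_g1 σ

def H1 : AddSubgroup R5 where
  carrier := {b | (∀ τ, Tm (coeff b) τ = coeff b τ) ∧ psi (coeff b) = b}
  zero_mem' := by
    have hc : coeff (0 : R5) = fun _ => (0:ℤ) := funext coeff_zero
    constructor
    · intro τ; rw [hc, Tm_zerof]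
    · rw [hc, psi_zerof]
  add_mem' := by
    rintro b c ⟨hb1, hb2⟩ ⟨hc1, hc2⟩
    have hc : coeff (b + c) = fun ρ => coeff b ρ + coeff c ρ := funext (coeff_add b c)
    constructor
    · intro τ; rw [hc, Tm_addf, hb1 τ, hc1 τ]
    · rw [hc, psi_addf, hb2, hc2]
  neg_mem' := by
    rintro b ⟨hb1, hb2⟩
    have hc : coeff (-b) = fun ρ => - coeff b ρ := funext (coeff_neg b)
    constructor
    · intro τ; rw [hc, Tm_negf, hb1 τ]
    · rw [hc, psi_negf, hb2]

def H2 : AddSubgroup R5 where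
  carrier := {b | ∀ τ, Tm (coeff b) τ = 0}
  zero_mem' := by
    intro τ
    have hc : coeff (0 : R5) = fun _ => (0:ℤ) := funext coeff_zero
    rw [hc, Tm_zerof]
  add_mem' := by
    rintro b c hb hc τ
    have h : coeff (b + c) = fun ρ => coeff b ρ + coeff c ρ := funext (coeff_add b c)
    rw [h, Tm_addf, hb τ, hc τ, add_zero]
  neg_mem' := by
    rintro b hb τ
    have h : coeff (-b) = fun ρ => - coeff b ρ := funext (coeff_neg b)
    rw [h, Tm_negf, hb τ, neg_zero]

theorem hW1 : W1 ≤ H1 := by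
  rw [W1]
  apply (AddSubgroup.closure_le _).2
  rintro y ⟨σ, rfl⟩
  exact ⟨main_g1 σ, psi_g1 σ⟩

theorem hW2 : W2 ≤ H2 := by
  rw [W2]
  apply (AddSubgroup.closure_le _).2
  rintro y (⟨σ, rfl⟩ | ⟨σ, rfl⟩)
  · exact main_g2a σ
  · exact main_g2b σ

/-- `W₁ ∩ W₂ = 0`. -/
theorem stmt10 : W1 ⊓ W2 = ⊥ := by
  rw [eq_bot_iff]
  intro a ha
  rw [AddSubgroup.mem_inf] at ha
  obtain ⟨hfix, hpsi⟩ := hW1 ha.1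
  have hz := hW2 ha.2
  have hc0 : coeff a = fun _ => (0:ℤ) :=
    funext fun τ => (hfix τ).symm.trans (hz τ)
  rw [hc0, psi_zerof] at hpsi
  rw [AddSubgroup.mem_bot, ← hpsi]
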